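/- Let p, q ≥ 1, N = p + q, and let (t_i, a_i)_{i=1}^r be a good parameter satisfying the nonvanishing condition, such that every rational occurs at most twice in ν, the number of elements of ν_j lying in ν_{<j} is strictly less than q_j, and the number of elements of ν_j lying in ν_{>j} is strictly less than p_j. Write ν_j = {ν_{j,1} > … > ν_{j,a_j}}, and let σ_1 > … > σ_{N − a_j} be the elements of ν_{<j} ⊔ ν_{>j} (which is multiplicity-free under these hypotheses) in decreasing order. Let i_0 be the MINIMAL integer with 1 ≤ i_0 ≤ a_j and a_j − i_0 + 1 + #{x ∈ ν_{<j} ⊔ ν_{>j} : x > ν_{j,i_0}} = p. Define λ = (λ_1, …, λ_N) by: λ_i = σ_i − (p−q+1)/2 + i for i < p − a_j + i_0; λ_i = ν_{j,1} + (N+1)/2 − a_j for p − a_j + i_0 ≤ i ≤ p; λ_i = ν_{j,1} − (N−1)/2 for p+1 ≤ i ≤ p + i_0 − 1; and λ_i = σ_{i − a_j} − (N+1)/2 − p + i for i ≥ p + i_0. Then λ ∈ ℤ^N with λ_1 ≥ … ≥ λ_p and λ_{p+1} ≥ … ≥ λ_N, and P(λ) ⊔ Q(λ) = ν as multisets. 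-/

import Mathlib

open Finset

/-- The multiset `P(λ) = {λ_i − (N−1)/2 + (p−i) : 1 ≤ i ≤ p}` of rationals,
for `N = p + q` and a weight `λ : ℕ → ℤ` (1-based indexing). -/
def Pms (p q : ℕ) (lam : ℕ → ℤ) : Multiset ℚ :=
  (Finset.Icc 1 p).val.map
    (fun i => (lam i : ℚ) - ((p : ℚ) + (q : ℚ) - 1) / 2 + ((p : ℚ) - (i : ℚ)))

/-- The multiset `Q(λ) = {λ_{p+i} + (N−1)/2 − (i−1) : 1 ≤ i ≤ q}`. -/
def Qms (p q : ℕ) (lam : ℕ → ℤ) : Multiset ℚ :=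
  (Finset.Icc 1 q).val.map
    (fun i => (lam (p + i) : ℚ) + ((p : ℚ) + (q : ℚ) - 1) / 2 - ((i : ℚ) - 1))

/-- Dominance: `λ_1 ≥ … ≥ λ_p` and `λ_{p+1} ≥ … ≥ λ_{p+q}`. -/
def Dominant (p q : ℕ) (lam : ℕ → ℤ) : Prop :=
  (∀ i, 1 ≤ i → i < p → lam (i + 1) ≤ lam i) ∧
  (∀ i, p + 1 ≤ i → i < p + q → lam (i + 1) ≤ lam i)

/-- `p' = #{i : 1 ≤ i ≤ p, λ_i = λ_p}`. -/
def pPrime (p : ℕ) (lam : ℕ → ℤ) : ℕ :=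
  ((Finset.Icc 1 p).filter (fun i => lam i = lam p)).card

/-- `q' = #{i : p+1 ≤ i ≤ p+q, λ_i = λ_{p+1}}`. -/
def qPrime (p q : ℕ) (lam : ℕ → ℤ) : ℕ :=
  ((Finset.Icc (p + 1) (p + q)).filter (fun i => lam i = lam (p + 1))).card

/-- The segment `P' = {λ_p − (N−1)/2 + k : 0 ≤ k ≤ p'−1}`. -/
def Pseg (p q : ℕ) (lam : ℕ → ℤ) : Finset ℚ :=
  (Finset.range (pPrime p lam)).image
    (fun k : ℕ => (lam p : ℚ) - ((p : ℚ) + (q : ℚ) - 1) / 2 + (k : ℚ))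

/-- The segment `Q' = {λ_{p+1} + (N−1)/2 − k : 0 ≤ k ≤ q'−1}`. -/
def Qseg (p q : ℕ) (lam : ℕ → ℤ) : Finset ℚ :=
  (Finset.range (qPrime p q lam)).image
    (fun k : ℕ => (lam (p + 1) : ℚ) + ((p : ℚ) + (q : ℚ) - 1) / 2 - (k : ℚ))

/-- `I = P' ∩ Q'`. -/
def Iseg (p q : ℕ) (lam : ℕ → ℤ) : Finset ℚ := Pseg p q lam ∩ Qseg p q lam

/-- A good parameter `(t_1,a_1),…,(t_r,a_r)` for `U(p,q)` (1-based indexing). -/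
structure GoodParam (p q r : ℕ) (t : ℕ → ℤ) (a : ℕ → ℕ) : Prop where
  hr : 1 ≤ r
  hpos : ∀ i ∈ Finset.Icc 1 r, 0 < a i
  hsum : ∑ i ∈ Finset.Icc 1 r, a i = p + q
  heven : ∀ i ∈ Finset.Icc 1 r, Even (t i + (a i : ℤ) + (p : ℤ) + (q : ℤ))
  hdec : ∀ i, 1 ≤ i → i < r → t (i + 1) ≤ t i
  hadec : ∀ i, 1 ≤ i → i < r → t i = t (i + 1) → a (i + 1) ≤ a i

/-- The segment `ν_i = {(t_i − a_i + 1)/2 + k : 0 ≤ k ≤ a_i − 1}` as a multiset of rationals. -/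
def nu (t : ℕ → ℤ) (a : ℕ → ℕ) (i : ℕ) : Multiset ℚ :=
  (Multiset.range (a i)).map (fun k => ((t i : ℚ) - (a i : ℚ) + 1) / 2 + (k : ℚ))

/-- `ν_{<j} = ν_1 ⊔ … ⊔ ν_{j−1}`. -/
def nuLt (t : ℕ → ℤ) (a : ℕ → ℕ) (j : ℕ) : Multiset ℚ :=
  ∑ k ∈ Finset.Icc 1 (j - 1), nu t a k

/-- `ν_{>j} = ν_{j+1} ⊔ … ⊔ ν_r`. -/
def nuGt (t : ℕ → ℤ) (a : ℕ → ℕ) (r j : ℕ) : Multiset ℚ :=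
  ∑ k ∈ Finset.Icc (j + 1) r, nu t a k

/-- `ν = ν_1 ⊔ … ⊔ ν_r`. -/
def nuAll (t : ℕ → ℤ) (a : ℕ → ℕ) (r : ℕ) : Multiset ℚ :=
  ∑ k ∈ Finset.Icc 1 r, nu t a k

/-- `j` is the least index with `a_1 + … + a_j ≥ p`. -/
structure LeastJ (p r : ℕ) (a : ℕ → ℕ) (j : ℕ) : Prop where
  h1 : 1 ≤ j
  hle : j ≤ r
  hge : p ≤ ∑ ℓ ∈ Finset.Icc 1 j, a ℓ
  hmin : ∀ i, i < j → ∑ ℓ ∈ Finset.Icc 1 i, a ℓ < p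

/-- `p_j = p − (a_1 + … + a_{j−1})`. -/
def pj (p : ℕ) (a : ℕ → ℕ) (j : ℕ) : ℕ := p - ∑ ℓ ∈ Finset.Icc 1 (j - 1), a ℓ

/-- `q_j = q − (a_{j+1} + … + a_r)`. -/
def qj (q r : ℕ) (a : ℕ → ℕ) (j : ℕ) : ℕ := q - ∑ ℓ ∈ Finset.Icc (j + 1) r, a ℓ

/-- The nonvanishing condition: `ν_{<j}` and `ν_{>j}` are multiplicity free,
`#(ν_j ∩ ν_{<j}) ≤ q_j` and `#(ν_j ∩ ν_{>j}) ≤ p_j`. -/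
def NonVanishing (p q r : ℕ) (t : ℕ → ℤ) (a : ℕ → ℕ) (j : ℕ) : Prop :=
  (nuLt t a j).Nodup ∧ (nuGt t a r j).Nodup ∧
  Multiset.card ((nu t a j).filter (fun x => x ∈ nuLt t a j)) ≤ qj q r a j ∧
  Multiset.card ((nu t a j).filter (fun x => x ∈ nuGt t a r j)) ≤ pj p a j

set_option maxHeartbeats 2000000 in
/-- under nonvanishing, multiplicity at most two in `ν`, and the strict
inequalities `#(ν_j ∩ ν_{<j}) < q_j`, `#(ν_j ∩ ν_{>j}) < p_j`, the multiset
`ν_{<j} ⊔ ν_{>j}` is multiplicity free, and, with `σ_1 > … > σ_{N−a_j}` its elements in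
decreasing order and `i_0` minimal with `1 ≤ i_0 ≤ a_j` and
`a_j − i_0 + 1 + #{x ∈ ν_{<j} ⊔ ν_{>j} : x > ν_{j,i_0}} = p`, the prescribed tuple `λ`
is integral, dominant, and satisfies `P(λ) ⊔ Q(λ) = ν`. -/
theorem statement14 (p q r j i0 : ℕ) (hp : 1 ≤ p) (hq : 1 ≤ q) (t : ℕ → ℤ) (a : ℕ → ℕ)
    (hgp : GoodParam p q r t a) (hj : LeastJ p r a j)
    (hnv : NonVanishing p q r t a j)
    (hmult : ∀ x : ℚ, Multiset.count x (nuAll t a r) ≤ 2)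
    (hltstrict : Multiset.card ((nu t a j).filter (fun x => x ∈ nuLt t a j)) < qj q r a j)
    (hgtstrict : Multiset.card ((nu t a j).filter (fun x => x ∈ nuGt t a r j)) < pj p a j)
    (σ : ℕ → ℚ)
    (hσdec : ∀ i, 1 ≤ i → i < p + q - a j → σ (i + 1) < σ i)
    (hσ : nuLt t a j + nuGt t a r j = (Finset.Icc 1 (p + q - a j)).val.map σ)
    (hi01 : 1 ≤ i0) (hi0a : i0 ≤ a j)
    (hi0prop : a j - i0 + 1 + Multiset.card ((nuLt t a j + nuGt t a r j).filter
      (fun x => ((t j : ℚ) + (a j : ℚ) - 1) / 2 - ((i0 : ℚ) - 1) < x)) = p)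
    (hi0min : ∀ i, 1 ≤ i → i < i0 →
      a j - i + 1 + Multiset.card ((nuLt t a j + nuGt t a r j).filter
        (fun x => ((t j : ℚ) + (a j : ℚ) - 1) / 2 - ((i : ℚ) - 1) < x)) ≠ p) :
    (nuLt t a j + nuGt t a r j).Nodup ∧
    ∃ lam : ℕ → ℤ,
      (∀ i, 1 ≤ i → i ≤ p + q → (lam i : ℚ) =
        (if (i : ℤ) < (p : ℤ) - (a j : ℤ) + (i0 : ℤ) then
          σ i - ((p : ℚ) - (q : ℚ) + 1) / 2 + (i : ℚ)
        else if i ≤ p then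
          ((t j : ℚ) + (a j : ℚ) - 1) / 2 + ((p : ℚ) + (q : ℚ) + 1) / 2 - (a j : ℚ)
        else if i ≤ p + i0 - 1 then
          ((t j : ℚ) + (a j : ℚ) - 1) / 2 - ((p : ℚ) + (q : ℚ) - 1) / 2
        else
          σ (i - a j) - ((p : ℚ) + (q : ℚ) + 1) / 2 - (p : ℚ) + (i : ℚ))) ∧
      Dominant p q lam ∧
      Pms p q lam + Qms p q lam = nuAll t a r := by
    classical
  obtain ⟨hr, hpos, hsum, heven, hdec, hadec⟩ := hgp
  have hj1 := hj.h1
  have hjr := hj.hle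
  have hjmem : j ∈ Finset.Icc 1 r := Finset.mem_Icc.mpr ⟨hj1, hjr⟩
  set M := p + q - a j with hMdef
  have hAle : a j ≤ p + q := by
    rw [← hsum]
    exact Finset.single_le_sum (fun i _ => Nat.zero_le _) hjmem
  have hMA : M + a j = p + q := by omega
  set cnt := Multiset.card ((nuLt t a j + nuGt t a r j).filter
      (fun x => ((t j : ℚ) + (a j : ℚ) - 1) / 2 - ((i0 : ℚ) - 1) < x)) with hcntdef
  have hcntp : a j - i0 + 1 + cnt = p := hi0prop
  have hpA : p + i0 = a j + 1 + cnt := by omega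
  have hcard : Multiset.card (nuLt t a j + nuGt t a r j) = M := by
    rw [hσ, Multiset.card_map]
    simp [Nat.card_Icc]
  have hcntM : cnt ≤ M := by
    rw [hcntdef, ← hcard]
    exact Multiset.card_le_card (Multiset.filter_le _ _)
  have hMq : M + i0 = cnt + 1 + q := by omega
  have hq1 : i0 - 1 ≤ q := by omega
  -- gap lemma for the half-integer lattice
  have hgap : ∀ x y : ℚ, (∃ z : ℤ, x = (z : ℚ) + ((p : ℚ) + (q : ℚ) + 1) / 2) →
      (∃ z : ℤ, y = (z : ℚ) + ((p : ℚ) + (q : ℚ) + 1) / 2) → y < x → y + 1 ≤ x := by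
    rintro x y ⟨z1, rfl⟩ ⟨z2, rfl⟩ hlt
    have h1 : (z2 : ℚ) < z1 := by linarith
    have h2 : z2 < z1 := by exact_mod_cast h1
    have h3 : (z2 : ℚ) + 1 ≤ z1 := by exact_mod_cast h2
    linarith
  have hnu' : ∀ k, nu t a k = (Multiset.range (a k)).map
      (fun m : ℕ => ((t k : ℚ) - (a k : ℚ) + 1) / 2 + (m : ℚ)) := by
    intro k
    simp [nu, Multiset.map_bind, Multiset.bind_singleton, Multiset.map_map]
  have hLat : ∀ k ∈ Finset.Icc 1 r, ∀ x ∈ nu t a k,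
      ∃ z : ℤ, x = (z : ℚ) + ((p : ℚ) + (q : ℚ) + 1) / 2 := by
    intro k hk x hx
    obtain ⟨w, hw⟩ := heven k hk
    rw [hnu' k] at hx
    obtain ⟨m, hm, rfl⟩ := Multiset.mem_map.mp hx
    rw [Multiset.mem_range] at hm
    refine ⟨w - a k - p - q + m, ?_⟩
    have hw' : (t k : ℚ) + (a k : ℚ) + p + q = (w : ℚ) + w := by exact_mod_cast congrArg (fun z : ℤ => (z : ℚ)) hw
    push_cast
    linarith
  have hLat2 : ∀ x ∈ nuLt t a j + nuGt t a r j,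
      ∃ z : ℤ, x = (z : ℚ) + ((p : ℚ) + (q : ℚ) + 1) / 2 := by
    intro x hx
    rcases Multiset.mem_add.mp hx with h | h
    · rw [nuLt] at h
      obtain ⟨k, hk, hxk⟩ := Multiset.mem_sum.mp h
      rw [Finset.mem_Icc] at hk
      exact hLat k (Finset.mem_Icc.mpr ⟨hk.1, by omega⟩) x hxk
    · rw [nuGt] at h
      obtain ⟨k, hk, hxk⟩ := Multiset.mem_sum.mp h
      rw [Finset.mem_Icc] at hk
      exact hLat k (Finset.mem_Icc.mpr ⟨by omega, hk.2⟩) x hxk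
  have hσmem : ∀ m, 1 ≤ m → m ≤ M → σ m ∈ nuLt t a j + nuGt t a r j := by
    intro m h1 h2
    rw [hσ]
    exact Multiset.mem_map_of_mem σ (Finset.mem_val.mpr (Finset.mem_Icc.mpr ⟨h1, h2⟩))
  have hσLat : ∀ m, 1 ≤ m → m ≤ M →
      ∃ z : ℤ, σ m = (z : ℚ) + ((p : ℚ) + (q : ℚ) + 1) / 2 :=
    fun m h1 h2 => hLat2 _ (hσmem m h1 h2)
  have hθLat : ∃ z : ℤ, ((t j : ℚ) + (a j : ℚ) - 1) / 2 - ((i0 : ℚ) - 1)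
      = (z : ℚ) + ((p : ℚ) + (q : ℚ) + 1) / 2 := by
    obtain ⟨w, hw⟩ := heven j hjmem
    refine ⟨w - p - q - i0, ?_⟩
    have hw' : (t j : ℚ) + (a j : ℚ) + p + q = (w : ℚ) + w := by exact_mod_cast congrArg (fun z : ℤ => (z : ℚ)) hw
    push_cast
    linarith
  have hanti : ∀ m' m, 1 ≤ m' → m' ≤ m → m ≤ M → σ m ≤ σ m' := by
    intro m' m h1 h2 h3
    induction m, h2 using Nat.le_induction with
    | base => exact le_refl _
    | succ n hn ih =>
      have h4 := hσdec n (by omega) (by omega)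
      have h5 := ih (by omega)
      linarith
  have hcnt2 : cnt = ((Finset.Icc 1 M).filter
      (fun m => ((t j : ℚ) + (a j : ℚ) - 1) / 2 - ((i0 : ℚ) - 1) < σ m)).card := by
    rw [hcntdef, hσ, ← Multiset.countP_eq_card_filter, Multiset.countP_map]
    rfl
  have hfilterset : (Finset.Icc 1 M).filter
      (fun m => ((t j : ℚ) + (a j : ℚ) - 1) / 2 - ((i0 : ℚ) - 1) < σ m) = Finset.Icc 1 cnt := by
    refine (Finset.eq_of_subset_of_card_le ?_ ?_).symm
    · intro m hm
      rw [Finset.mem_Icc] at hm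
      rw [Finset.mem_filter, Finset.mem_Icc]
      refine ⟨⟨hm.1, by omega⟩, ?_⟩
      by_contra hcon
      push_neg at hcon
      have hsub : (Finset.Icc 1 M).filter
          (fun m => ((t j : ℚ) + (a j : ℚ) - 1) / 2 - ((i0 : ℚ) - 1) < σ m)
          ⊆ Finset.Icc 1 (m - 1) := by
        intro x hx
        rw [Finset.mem_filter, Finset.mem_Icc] at hx
        rw [Finset.mem_Icc]
        refine ⟨hx.1.1, ?_⟩
        by_contra hxm
        push_neg at hxm
        have := hanti m x hm.1 (by omega) hx.1.2
        linarith [hx.2]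
      have hcard2 := Finset.card_le_card hsub
      rw [← hcnt2, Nat.card_Icc] at hcard2
      omega
    · rw [← hcnt2, Nat.card_Icc]
      omega
  have hgt : ∀ m, 1 ≤ m → m ≤ cnt →
      ((t j : ℚ) + (a j : ℚ) - 1) / 2 - ((i0 : ℚ) - 1) < σ m := by
    intro m h1 h2
    have hmem : m ∈ Finset.Icc 1 cnt := Finset.mem_Icc.mpr ⟨h1, h2⟩
    rw [← hfilterset] at hmem
    exact (Finset.mem_filter.mp hmem).2
  have hle' : ∀ m, cnt < m → m ≤ M →
      σ m ≤ ((t j : ℚ) + (a j : ℚ) - 1) / 2 - ((i0 : ℚ) - 1) := by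
    intro m h1 h2
    by_contra hcon
    push_neg at hcon
    have hmem : m ∈ (Finset.Icc 1 M).filter
        (fun m => ((t j : ℚ) + (a j : ℚ) - 1) / 2 - ((i0 : ℚ) - 1) < σ m) :=
      Finset.mem_filter.mpr ⟨Finset.mem_Icc.mpr ⟨by omega, h2⟩, hcon⟩
    rw [hfilterset, Finset.mem_Icc] at hmem
    omega
  -- the weight function
  obtain ⟨f, hfdef⟩ : ∃ f : ℕ → ℚ, f = fun i : ℕ =>
      (if (i : ℤ) < (p : ℤ) - (a j : ℤ) + (i0 : ℤ) then
          σ i - ((p : ℚ) - (q : ℚ) + 1) / 2 + (i : ℚ)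
        else if i ≤ p then
          ((t j : ℚ) + (a j : ℚ) - 1) / 2 + ((p : ℚ) + (q : ℚ) + 1) / 2 - (a j : ℚ)
        else if i ≤ p + i0 - 1 then
          ((t j : ℚ) + (a j : ℚ) - 1) / 2 - ((p : ℚ) + (q : ℚ) - 1) / 2
        else
          σ (i - a j) - ((p : ℚ) + (q : ℚ) + 1) / 2 - (p : ℚ) + (i : ℚ)) := ⟨_, rfl⟩
  have hB1 : ∀ i : ℕ, i ≤ cnt → f i = σ i - ((p : ℚ) - (q : ℚ) + 1) / 2 + (i : ℚ) := by
    intro i hi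
    rw [hfdef]
    simp only
    rw [if_pos (by omega)]
  have hB2 : ∀ i : ℕ, cnt < i → i ≤ p →
      f i = ((t j : ℚ) + (a j : ℚ) - 1) / 2 + ((p : ℚ) + (q : ℚ) + 1) / 2 - (a j : ℚ) := by
    intro i hi1 hi2
    rw [hfdef]
    simp only
    rw [if_neg (by omega), if_pos hi2]
  have hB3 : ∀ i : ℕ, p < i → i ≤ p + i0 - 1 →
      f i = ((t j : ℚ) + (a j : ℚ) - 1) / 2 - ((p : ℚ) + (q : ℚ) - 1) / 2 := by
    intro i hi1 hi2
    rw [hfdef]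
    simp only
    rw [if_neg (by omega), if_neg (by omega), if_pos hi2]
  have hB4 : ∀ i : ℕ, p + i0 ≤ i →
      f i = σ (i - a j) - ((p : ℚ) + (q : ℚ) + 1) / 2 - (p : ℚ) + (i : ℚ) := by
    intro i hi
    rw [hfdef]
    simp only
    rw [if_neg (by omega), if_neg (by omega), if_neg (by omega)]
  have hfint : ∀ i : ℕ, 1 ≤ i → i ≤ p + q → ∃ z : ℤ, f i = (z : ℚ) := by
    intro i h1 h2
    by_cases hc1 : i ≤ cnt
    · obtain ⟨z, hz⟩ := hσLat i h1 (le_trans hc1 hcntM)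
      refine ⟨z + q + i, ?_⟩
      rw [hB1 i hc1, hz]
      push_cast
      ring
    · by_cases hc2 : i ≤ p
      · obtain ⟨w, hw⟩ := heven j hjmem
        have hw' : (t j : ℚ) + (a j : ℚ) + p + q = (w : ℚ) + w := by
          exact_mod_cast congrArg (fun z : ℤ => (z : ℚ)) hw
        refine ⟨w - a j, ?_⟩
        rw [hB2 i (by omega) hc2]
        push_cast
        linarith
      · by_cases hc3 : i ≤ p + i0 - 1
        · obtain ⟨w, hw⟩ := heven j hjmem
          have hw' : (t j : ℚ) + (a j : ℚ) + p + q = (w : ℚ) + w := by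
            exact_mod_cast congrArg (fun z : ℤ => (z : ℚ)) hw
          refine ⟨w - p - q, ?_⟩
          rw [hB3 i (by omega) hc3]
          push_cast
          linarith
        · obtain ⟨z, hz⟩ := hσLat (i - a j) (by omega) (by omega)
          refine ⟨z - p + i, ?_⟩
          rw [hB4 i (by omega), hz]
          push_cast
          ring
  have hlamQ : ∀ i : ℕ, 1 ≤ i → i ≤ p + q → ((⌊f i⌋ : ℤ) : ℚ) = f i := by
    intro i h1 h2
    obtain ⟨z, hz⟩ := hfint i h1 h2
    rw [hz, Int.floor_intCast]
  have hmapsum : ∀ (s : Finset ℕ) (g : ℕ → ℚ), s.val.map g = ∑ i ∈ s, ({g i} : Multiset ℚ) := by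
    intro s g
    refine Finset.induction_on s ?_ ?_
    · simp
    · intro x s hx ih
      rw [Finset.sum_insert hx, Finset.insert_val, Multiset.ndinsert_of_notMem (by simpa using hx),
        Multiset.map_cons, ← Multiset.singleton_add, ih]
  have hIcc : ∀ n : ℕ, Finset.Icc 1 n = Finset.Ioc 0 n := fun n => Finset.Icc_add_one_left_eq_Ioc 0 n
  constructor
  · -- Nodup
    rw [hσ]
    refine Multiset.Nodup.map_on ?_ (Finset.Icc 1 M).nodup
    intro x hx y hy hxy
    rw [Finset.mem_val, Finset.mem_Icc] at hx hy
    by_contra hne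
    rcases Nat.lt_or_ge x y with h | h
    · have h1 := hσdec x hx.1 (by omega)
      have h2 := hanti (x + 1) y (by omega) (by omega) hy.2
      rw [hxy] at h1
      linarith
    · have h' : y < x := by omega
      have h1 := hσdec y hy.1 (by omega)
      have h2 := hanti (y + 1) x (by omega) (by omega) hx.2
      rw [← hxy] at h1
      linarith
  refine ⟨fun i => ⌊f i⌋, ?_, ⟨?_, ?_⟩, ?_⟩
  · intro i h1 h2
    show ((⌊f i⌋ : ℤ) : ℚ) = _
    rw [hlamQ i h1 h2, hfdef]
  · -- dominance, P side
    intro i h1 h2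
    show ⌊f (i + 1)⌋ ≤ ⌊f i⌋
    rw [← @Int.cast_le ℚ, hlamQ (i + 1) (by omega) (by omega), hlamQ i (by omega) (by omega)]
    by_cases hc : i + 1 ≤ cnt
    · rw [hB1 i (by omega), hB1 (i + 1) hc]
      have hg := hgap (σ i) (σ (i + 1)) (hσLat i h1 (by omega)) (hσLat (i + 1) (by omega) (by omega))
        (hσdec i h1 (by omega))
      push_cast
      linarith
    · by_cases hc2 : i ≤ cnt
      · rw [hB1 i hc2, hB2 (i + 1) (by omega) (by omega)]
        have hg := hgap (σ i) (((t j : ℚ) + (a j : ℚ) - 1) / 2 - ((i0 : ℚ) - 1))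
          (hσLat i h1 (by omega)) hθLat (hgt i h1 hc2)
        have hic : (i : ℚ) = (cnt : ℚ) := by exact_mod_cast (by omega : i = cnt)
        have hpc : (p : ℚ) + (i0 : ℚ) = (a j : ℚ) + 1 + (cnt : ℚ) := by exact_mod_cast hpA
        push_cast
        linarith
      · rw [hB2 i (by omega) (by omega), hB2 (i + 1) (by omega) (by omega)]
  · -- dominance, Q side
    intro i h1 h2
    show ⌊f (i + 1)⌋ ≤ ⌊f i⌋
    rw [← @Int.cast_le ℚ, hlamQ (i + 1) (by omega) (by omega), hlamQ i (by omega) (by omega)]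
    by_cases hc : i + 1 ≤ p + i0 - 1
    · rw [hB3 i (by omega) (by omega), hB3 (i + 1) (by omega) hc]
    · by_cases hc2 : i ≤ p + i0 - 1
      · rw [hB3 i (by omega) hc2, hB4 (i + 1) (by omega),
          show i + 1 - a j = cnt + 1 from by omega]
        have hg := hle' (cnt + 1) (by omega) (by omega)
        have hic : (i : ℚ) + 1 = (p : ℚ) + (i0 : ℚ) := by
          exact_mod_cast (by omega : i + 1 = p + i0)
        push_cast
        linarith
      · rw [hB4 i (by omega), hB4 (i + 1) (by omega),
          show i + 1 - a j = (i - a j) + 1 from by omega]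
        have hg := hgap (σ (i - a j)) (σ (i - a j + 1))
          (hσLat (i - a j) (by omega) (by omega)) (hσLat (i - a j + 1) (by omega) (by omega))
          (hσdec (i - a j) (by omega) (by omega))
        push_cast
        linarith
  · -- the multiset identity
    obtain ⟨G, hGdef⟩ : ∃ G : ℕ → Multiset ℚ, G = fun i : ℕ =>
        ({(⌊f i⌋ : ℚ) - ((p : ℚ) + (q : ℚ) - 1) / 2 + ((p : ℚ) - (i : ℚ))} : Multiset ℚ) := ⟨_, rfl⟩
    obtain ⟨H, hHdef⟩ : ∃ H : ℕ → Multiset ℚ, H = fun i : ℕ =>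
        ({(⌊f (p + i)⌋ : ℚ) + ((p : ℚ) + (q : ℚ) - 1) / 2 - ((i : ℚ) - 1)} : Multiset ℚ) := ⟨_, rfl⟩
    obtain ⟨K, hKdef⟩ : ∃ K : ℕ → Multiset ℚ, K = fun k : ℕ =>
        ({((t j : ℚ) - (a j : ℚ) + 1) / 2 + (k : ℚ)} : Multiset ℚ) := ⟨_, rfl⟩
    have e1 : Pms p q (fun i => ⌊f i⌋) = ∑ i ∈ Finset.Icc 1 p, G i := by
      rw [hGdef]; exact hmapsum _ _
    have e2 : Qms p q (fun i => ⌊f i⌋) = ∑ i ∈ Finset.Icc 1 q, H i := by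
      rw [hHdef]; exact hmapsum _ _
    have hsplitAll : nuAll t a r = (nuLt t a j + nuGt t a r j) + nu t a j := by
      unfold nuAll nuLt nuGt
      rw [hIcc r, hIcc (j - 1), Finset.Icc_add_one_left_eq_Ioc]
      have h3 : Finset.Ioc (j - 1) j = {j} := by
        ext x
        simp only [Finset.mem_Ioc, Finset.mem_singleton]
        omega
      calc ∑ k ∈ Finset.Ioc 0 r, nu t a k
          = (∑ k ∈ Finset.Ioc 0 (j - 1), nu t a k + ∑ k ∈ Finset.Ioc (j - 1) j, nu t a k)
              + ∑ k ∈ Finset.Ioc j r, nu t a k := by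
            rw [Finset.sum_Ioc_consecutive _ (Nat.zero_le (j - 1)) (by omega : j - 1 ≤ j),
              Finset.sum_Ioc_consecutive _ (Nat.zero_le j) hjr]
        _ = _ := by
            rw [h3, Finset.sum_singleton]
            abel
    have hnuj : nu t a j = ∑ k ∈ Finset.Ico 0 (a j - i0 + 1), K k
        + ∑ k ∈ Finset.Ico (a j - i0 + 1) (a j), K k := by
      rw [Finset.sum_Ico_consecutive K (Nat.zero_le _) (by omega : a j - i0 + 1 ≤ a j),
        ← Finset.range_eq_Ico, hnu' j, ← Finset.range_val, hmapsum]
      simp only [hKdef]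
    have hP1 : ∑ i ∈ Finset.Ioc 0 cnt, G i = ∑ i ∈ Finset.Ioc 0 cnt, ({σ i} : Multiset ℚ) := by
      refine Finset.sum_congr rfl fun i hi => ?_
      rw [Finset.mem_Ioc] at hi
      simp only [hGdef]
      rw [hlamQ i hi.1 (by omega), hB1 i hi.2]
      congr 1
      push_cast
      ring
    have hP2 : ∑ i ∈ Finset.Ioc cnt p, G i
        = ∑ i ∈ Finset.Ioc cnt p, ({((t j : ℚ) - (a j : ℚ) + 1) / 2 + ((p - i : ℕ) : ℚ)} : Multiset ℚ) := by
      refine Finset.sum_congr rfl fun i hi => ?_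
      rw [Finset.mem_Ioc] at hi
      simp only [hGdef]
      rw [hlamQ i (by omega) (by omega), hB2 i hi.1 hi.2]
      congr 1
      rw [Nat.cast_sub hi.2]
      ring
    have hQ1 : ∑ i ∈ Finset.Ioc 0 (i0 - 1), H i
        = ∑ i ∈ Finset.Ioc 0 (i0 - 1), ({((t j : ℚ) - (a j : ℚ) + 1) / 2 + ((a j - i : ℕ) : ℚ)} : Multiset ℚ) := by
      refine Finset.sum_congr rfl fun i hi => ?_
      rw [Finset.mem_Ioc] at hi
      simp only [hHdef]
      rw [hlamQ (p + i) (by omega) (by omega), hB3 (p + i) (by omega) (by omega)]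
      congr 1
      rw [Nat.cast_sub (by omega : i ≤ a j)]
      ring
    have hQ2 : ∑ i ∈ Finset.Ioc (i0 - 1) q, H i
        = ∑ i ∈ Finset.Ioc (i0 - 1) q, ({σ (p + i - a j)} : Multiset ℚ) := by
      refine Finset.sum_congr rfl fun i hi => ?_
      rw [Finset.mem_Ioc] at hi
      simp only [hHdef]
      rw [hlamQ (p + i) (by omega) (by omega), hB4 (p + i) (by omega)]
      congr 1
      push_cast
      ring
    have hT2 : ∑ i ∈ Finset.Ioc (i0 - 1) q, ({σ (p + i - a j)} : Multiset ℚ)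
        = ∑ m ∈ Finset.Ioc cnt M, ({σ m} : Multiset ℚ) := by
      refine Finset.sum_nbij' (fun i => p + i - a j) (fun m => m + a j - p)
        (fun i hi => ?_) (fun m hm => ?_) (fun i hi => ?_) (fun m hm => ?_) (fun i hi => ?_)
      · simp only [Finset.mem_Ioc] at hi ⊢; omega
      · simp only [Finset.mem_Ioc] at hm ⊢; omega
      · simp only [Finset.mem_Ioc] at hi; show p + i - a j + a j - p = i; omega
      · simp only [Finset.mem_Ioc] at hm; show p + (m + a j - p) - a j = m; omega
      · rfl
    have hU1 : ∑ i ∈ Finset.Ioc cnt p, ({((t j : ℚ) - (a j : ℚ) + 1) / 2 + ((p - i : ℕ) : ℚ)} : Multiset ℚ)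
        = ∑ k ∈ Finset.Ico 0 (a j - i0 + 1), K k := by
      refine Finset.sum_nbij' (fun i => p - i) (fun k => p - k)
        (fun i hi => ?_) (fun k hk => ?_) (fun i hi => ?_) (fun k hk => ?_) (fun i hi => ?_)
      · simp only [Finset.mem_Ioc] at hi; simp only [Finset.mem_Ico]; omega
      · simp only [Finset.mem_Ico] at hk; simp only [Finset.mem_Ioc]; omega
      · simp only [Finset.mem_Ioc] at hi; show p - (p - i) = i; omega
      · simp only [Finset.mem_Ico] at hk; show p - (p - k) = k; omega
      · simp only [hKdef]
    have hU2 : ∑ i ∈ Finset.Ioc 0 (i0 - 1), ({((t j : ℚ) - (a j : ℚ) + 1) / 2 + ((a j - i : ℕ) : ℚ)} : Multiset ℚ)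
        = ∑ k ∈ Finset.Ico (a j - i0 + 1) (a j), K k := by
      refine Finset.sum_nbij' (fun i => a j - i) (fun k => a j - k)
        (fun i hi => ?_) (fun k hk => ?_) (fun i hi => ?_) (fun k hk => ?_) (fun i hi => ?_)
      · simp only [Finset.mem_Ioc] at hi; simp only [Finset.mem_Ico]; omega
      · simp only [Finset.mem_Ico] at hk; simp only [Finset.mem_Ioc]; omega
      · simp only [Finset.mem_Ioc] at hi; show a j - (a j - i) = i; omega
      · simp only [Finset.mem_Ico] at hk; show a j - (a j - k) = k; omega
      · simp only [hKdef]
    have eR : nuAll t a r = (∑ m ∈ Finset.Ioc 0 cnt, ({σ m} : Multiset ℚ)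
        + ∑ m ∈ Finset.Ioc cnt M, ({σ m} : Multiset ℚ))
        + (∑ k ∈ Finset.Ico 0 (a j - i0 + 1), K k
        + ∑ k ∈ Finset.Ico (a j - i0 + 1) (a j), K k) := by
      rw [hsplitAll, hσ, hIcc M, hmapsum,
        Finset.sum_Ioc_consecutive (fun m => ({σ m} : Multiset ℚ)) (Nat.zero_le cnt) hcntM,
        ← hnuj]
    calc Pms p q (fun i => ⌊f i⌋) + Qms p q (fun i => ⌊f i⌋)
        = (∑ i ∈ Finset.Ioc 0 cnt, G i + ∑ i ∈ Finset.Ioc cnt p, G i)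
          + (∑ i ∈ Finset.Ioc 0 (i0 - 1), H i + ∑ i ∈ Finset.Ioc (i0 - 1) q, H i) := by
          rw [e1, e2, hIcc p, hIcc q,
            Finset.sum_Ioc_consecutive G (Nat.zero_le cnt) (by omega : cnt ≤ p),
            Finset.sum_Ioc_consecutive H (Nat.zero_le (i0 - 1)) hq1]
      _ = (∑ m ∈ Finset.Ioc 0 cnt, ({σ m} : Multiset ℚ)
            + ∑ k ∈ Finset.Ico 0 (a j - i0 + 1), K k)
          + (∑ k ∈ Finset.Ico (a j - i0 + 1) (a j), K k
            + ∑ m ∈ Finset.Ioc cnt M, ({σ m} : Multiset ℚ)) := by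
          rw [hP1, hP2, hQ1, hQ2, hU1, hU2, hT2]
      _ = _ := by rw [eR]; abel
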